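/- Let θ ∈ ℝ with sin θ ≠ 0. In ℂ² with standard basis e₀, e₁, set θ₊ := cos(θ/2)·e₀ + sin(θ/2)·e₁ and θ₋ := sin(θ/2)·e₀ − cos(θ/2)·e₁. Let f₀₀, f₀₁, f₁₀, f₁₁ ∈ [0,1] with f₀₀ + f₀₁ = 1 and f₁₀ + f₁₁ = 1, and set h₀ := f₀₀ − f₀₁ and h₁ := f₁₀ − f₁₁. Then there exists a unit vector φ ∈ ℂ² with |⟨φ, e₀⟩|² = f₀₀, |⟨φ, e₁⟩|² = f₀₁, |⟨φ, θ₊⟩|² = f₁₀ and |⟨φ, θ₋⟩|² = f₁₁ if and only if h₀² + h₁² − 2 h₀ h₁ cos θ ≤ sin² θ. -/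

import Mathlib

set_option maxHeartbeats 1000000

open scoped BigOperators

/-- The standard Hermitian inner product on `ℂ^d`, conjugate-linear in the
first argument: `⟨φ, ψ⟩ = ∑ i, conj (φ i) * ψ i`. -/
noncomputable def inp {d : ℕ} (φ ψ : Fin d → ℂ) : ℂ :=
  ∑ i, (starRingEnd ℂ) (φ i) * ψ i

lemma abs_inp_sq (φ : Fin 2 → ℂ) (u v : ℝ) :
    ‖inp φ ![(u:ℂ),(v:ℂ)]‖ ^ 2 =
      ((φ 0).re*u + (φ 1).re*v)^2 + ((φ 0).im*u + (φ 1).im*v)^2 := by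
  simp [inp, Fin.sum_univ_two, Complex.sq_norm, Complex.normSq_apply, Complex.add_re,
    Complex.add_im, Complex.mul_re, Complex.mul_im]
  ring

lemma abs_inp_sq' (φ : Fin 2 → ℂ) (u v : ℝ) :
    ‖inp φ ![(u:ℂ), -(v:ℂ)]‖ ^ 2 =
      ((φ 0).re*u - (φ 1).re*v)^2 + ((φ 0).im*u - (φ 1).im*v)^2 := by
  simp [inp, Fin.sum_univ_two, Complex.sq_norm, Complex.normSq_apply, Complex.add_re,
    Complex.add_im, Complex.mul_re, Complex.mul_im]
  ring

lemma abs_inp_e0 (φ : Fin 2 → ℂ) :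
    ‖inp φ ![1,0]‖ ^ 2 = (φ 0).re^2 + (φ 0).im^2 := by
  simp [inp, Fin.sum_univ_two, Complex.sq_norm, Complex.normSq_apply]; ring

lemma abs_inp_e1 (φ : Fin 2 → ℂ) :
    ‖inp φ ![0,1]‖ ^ 2 = (φ 1).re^2 + (φ 1).im^2 := by
  simp [inp, Fin.sum_univ_two, Complex.sq_norm, Complex.normSq_apply]; ring

lemma inp_self (φ : Fin 2 → ℂ) :
    inp φ φ = ((φ 0).re^2 + (φ 0).im^2 + (φ 1).re^2 + (φ 1).im^2 : ℝ) := by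
  rw [Complex.ext_iff]
  simp [inp, Fin.sum_univ_two, Complex.add_re, Complex.add_im, Complex.mul_re,
    Complex.mul_im, ← Complex.ofReal_pow]
  constructor <;> ring

theorem stmt8 (θ : ℝ) (hθ : Real.sin θ ≠ 0)
    (θp θm : Fin 2 → ℂ)
    (hθp : θp = ![(Real.cos (θ / 2) : ℂ), (Real.sin (θ / 2) : ℂ)])
    (hθm : θm = ![(Real.sin (θ / 2) : ℂ), -(Real.cos (θ / 2) : ℂ)])
    (f00 f01 f10 f11 : ℝ)
    (hf00 : f00 ∈ Set.Icc (0 : ℝ) 1) (hf01 : f01 ∈ Set.Icc (0 : ℝ) 1)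
    (hf10 : f10 ∈ Set.Icc (0 : ℝ) 1) (hf11 : f11 ∈ Set.Icc (0 : ℝ) 1)
    (hsum0 : f00 + f01 = 1) (hsum1 : f10 + f11 = 1)
    (h0 h1 : ℝ) (hh0 : h0 = f00 - f01) (hh1 : h1 = f10 - f11) :
    (∃ φ : Fin 2 → ℂ, inp φ φ = 1 ∧
        ‖inp φ ![1, 0]‖ ^ 2 = f00 ∧
        ‖inp φ ![0, 1]‖ ^ 2 = f01 ∧
        ‖inp φ θp‖ ^ 2 = f10 ∧
        ‖inp φ θm‖ ^ 2 = f11) ↔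
      h0 ^ 2 + h1 ^ 2 - 2 * h0 * h1 * Real.cos θ ≤ Real.sin θ ^ 2 := by
  have hpy : Real.sin θ^2 + Real.cos θ^2 = 1 := Real.sin_sq_add_cos_sq θ
  have hcsq : Real.cos (θ/2)^2 = (1 + Real.cos θ)/2 := by
    have h := Real.cos_two_mul (θ/2)
    rw [show 2*(θ/2) = θ by ring] at h
    linarith
  have hssq : Real.sin (θ/2)^2 = (1 - Real.cos θ)/2 := by
    have h2 := Real.sin_sq_add_cos_sq (θ/2)
    linarith
  have hs2 : Real.sin θ = 2 * Real.sin (θ/2) * Real.cos (θ/2) := by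
    have h := Real.sin_two_mul (θ/2)
    rw [show 2*(θ/2) = θ by ring] at h
    linarith
  constructor
  · rintro ⟨φ, hnorm, e00, e01, e10, e11⟩
    rw [abs_inp_e0] at e00
    rw [abs_inp_e1] at e01
    rw [hθp, abs_inp_sq] at e10
    rw [hθm, abs_inp_sq'] at e11
    set a1 := (φ 0).re with ha1; set a2 := (φ 0).im with ha2
    set b1 := (φ 1).re with hb1; set b2 := (φ 1).im with hb2
    set c := Real.cos (θ/2) with hcdef; set s := Real.sin (θ/2) with hsdef
    have hc : Real.cos θ = c^2 - s^2 := by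
      have h := Real.sin_sq_add_cos_sq (θ/2)
      rw [← hcdef, ← hsdef] at h
      rw [hcsq] at *
      linarith
    have hH1 : f10 - f11 = Real.cos θ * (f00 - f01)
        + Real.sin θ * (2*(a1*b1 + a2*b2)) := by
      rw [hc, hs2]
      linear_combination -e10 + e11 + (c^2 - s^2) * e00 - (c^2 - s^2) * e01
    have hD2 : (a1*b1 + a2*b2)^2 ≤ f00 * f01 := by
      nlinarith [sq_nonneg (a1*b2 - a2*b1), e00, e01]
    have h1le : (f00 - f01)^2 + 4*(a1*b1 + a2*b2)^2 ≤ 1 := by nlinarith [hD2]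
    have hmain : h0 ^ 2 + h1 ^ 2 - 2 * h0 * h1 * Real.cos θ
        = Real.sin θ^2 * ((f00 - f01)^2 + 4*(a1*b1 + a2*b2)^2) := by
      rw [hh0, hh1, hH1]
      linear_combination (-(f00 - f01)^2) * (Real.sin_sq_add_cos_sq θ)
    rw [hmain]
    nlinarith [mul_le_mul_of_nonneg_left h1le (sq_nonneg (Real.sin θ))]
  · intro hineq
    by_cases hf0 : f00 = 0
    · have hf01' : f01 = 1 := by linarith
      have hsq : (h1 + Real.cos θ)^2 ≤ 0 := by
        rw [hh0, hf0, hf01'] at hineq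
        nlinarith [hineq, hpy]
      have hh1' : h1 = -Real.cos θ := by nlinarith [sq_nonneg (h1 + Real.cos θ)]
      refine ⟨![0, 1], ?_, ?_, ?_, ?_, ?_⟩
      · rw [inp_self]; norm_num
      · rw [abs_inp_e0]; norm_num [hf0]
      · rw [abs_inp_e1]; norm_num [hf01']
      · rw [hθp, abs_inp_sq]; norm_num
        linarith [hssq, hh1', hsum1, hh1]
      · rw [hθm, abs_inp_sq']; norm_num
        linarith [hcsq, hh1', hsum1, hh1]
    · have hf00pos : 0 < f00 := lt_of_le_of_ne hf00.1 (Ne.symm hf0)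
      have hsθpos : 0 < Real.sin θ^2 :=
        lt_of_le_of_ne (sq_nonneg _) (Ne.symm (pow_ne_zero 2 hθ))
      obtain ⟨r, hrdef⟩ : ∃ r : ℝ, r = (h1 - h0*Real.cos θ)/(2*Real.sin θ) := ⟨_, rfl⟩
      have hr2 : 2*Real.sin θ * r = h1 - h0*Real.cos θ := by
        rw [hrdef]; field_simp
      have hkey : (h1 - h0*Real.cos θ)^2 ≤ Real.sin θ^2 * (1 - h0^2) := by
        nlinarith [hineq, hpy]
      have h0sq : 1 - h0^2 = 4*(f00*f01) := by rw [hh0]; nlinarith [hsum0]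
      have hrle : r^2 ≤ f00*f01 := by
        have h4 : (2*Real.sin θ * r)^2 ≤ Real.sin θ^2 * (4*(f00*f01)) := by
          rw [hr2, ← h0sq]; exact hkey
        nlinarith [h4, hsθpos]
      have hsqrtpos : 0 < Real.sqrt f00 := Real.sqrt_pos.mpr hf00pos
      have ha2 : Real.sqrt f00 ^ 2 = f00 := Real.sq_sqrt hf00.1
      obtain ⟨x, hxdef⟩ : ∃ x : ℝ, x = r / Real.sqrt f00 := ⟨_, rfl⟩
      have hax : Real.sqrt f00 * x = r := by
        rw [hxdef]; field_simp
      have hx2 : x^2 ≤ f01 := by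
        rw [hxdef, div_pow, ha2, div_le_iff₀ hf00pos]
        nlinarith [hrle]
      obtain ⟨y, hydef⟩ : ∃ y : ℝ, y = Real.sqrt (f01 - x^2) := ⟨_, rfl⟩
      have hy2 : y^2 = f01 - x^2 := by rw [hydef]; exact Real.sq_sqrt (by linarith)
      have hxy : x^2 + y^2 = f01 := by linarith
      refine ⟨![(Real.sqrt f00 : ℂ), (x:ℂ) + (y:ℂ)*Complex.I], ?_, ?_, ?_, ?_, ?_⟩
      · rw [inp_self]
        norm_num
        exact_mod_cast (by linarith : Real.sqrt f00 ^ 2 + x^2 + y^2 = 1)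
      · rw [abs_inp_e0]; norm_num [ha2]
      · rw [abs_inp_e1]; norm_num
        linarith
      · rw [hθp, abs_inp_sq]; norm_num
        linear_combination (Real.cos (θ/2)^2) * ha2 + (Real.sin (θ/2)^2) * hxy +
          (2*Real.cos (θ/2)*Real.sin (θ/2)) * hax + f00*hcsq + f01*hssq - r*hs2 +
          (1/2)*hr2 - (Real.cos θ/2)*hh0 + (1/2)*hh1 + (1/2)*hsum0 - (1/2)*hsum1
      · rw [hθm, abs_inp_sq']; norm_num
        linear_combination (Real.sin (θ/2)^2) * ha2 + (Real.cos (θ/2)^2) * hxy -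
          (2*Real.cos (θ/2)*Real.sin (θ/2)) * hax + f00*hssq + f01*hcsq + r*hs2 -
          (1/2)*hr2 + (Real.cos θ/2)*hh0 - (1/2)*hh1 + (1/2)*hsum0 - (1/2)*hsum1
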